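/- Fix k ∈ ℂ. The map q ↦ ψ(k,q), from L²((0,1),ℝ) (potentials extended by zero to ℝ) to ℂ, is Fréchet differentiable at every q₀ ∈ L²((0,1),ℝ), and its Fréchet derivative at q₀ is the bounded linear map h ↦ ∫₀¹ φ(x,k,q₀)·f₊(x,k,q₀)·h(x) dx. -/

import Mathlib

open MeasureTheory Set

noncomputable section

/-- `y` solves `-y'' + q y = E y` on `[0,∞)`: `y` is continuously differentiable with
derivative `y'`, `y'` is absolutely continuous (an indefinite integral of a locally
integrable `y''`), and the equation holds for a.e. `x ≥ 0`. -/
def SchrodingerSol (q : ℝ → ℂ) (E : ℂ) (y y' : ℝ → ℂ) : Prop :=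
  (∀ x : ℝ, 0 ≤ x → HasDerivAt y (y' x) x) ∧
  ∃ y'' : ℝ → ℂ,
    (∀ X : ℝ, IntegrableOn y'' (Icc 0 X)) ∧
    (∀ x : ℝ, 0 ≤ x → y' x = y' 0 + ∫ t in (0:ℝ)..x, y'' t) ∧
    (∀ᵐ x : ℝ, 0 ≤ x → -y'' x + q x * y x = E * y x)

/-- The Jost solution `f₊(·,k)` (with derivative `f'`): it solves
`-y'' + q y = k² y` and equals `e^{ikx}` for `x ≥ 1`. -/
def IsJost (q : ℝ → ℂ) (k : ℂ) (f f' : ℝ → ℂ) : Prop :=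
  SchrodingerSol q (k ^ 2) f f' ∧
  ∀ x : ℝ, 1 ≤ x → f x = Complex.exp (Complex.I * k * (x : ℂ))

/-- The fundamental solution `φ(·,k)` (with derivative `y'`): it solves
`-y'' + q y = k² y` with `y(0) = 0`, `y'(0) = 1`. -/
def IsPhi (q : ℝ → ℂ) (k : ℂ) (y y' : ℝ → ℂ) : Prop :=
  SchrodingerSol q (k ^ 2) y y' ∧ y 0 = 0 ∧ y' 0 = 1

/-- A potential in `L²((0,1),ℝ)` extended by zero to the whole line (as a
complex-valued function). -/
def extQ (q : Lp ℝ 2 (volume.restrict (Ioo (0:ℝ) 1))) : ℝ → ℂ :=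
  fun x => ((((Ioo (0:ℝ) 1).indicator (q : ℝ → ℝ) x) : ℝ) : ℂ)

local notation "μ01" => volume.restrict (Ioo (0:ℝ) 1)

instance : IsProbabilityMeasure (volume.restrict (Ioo (0:ℝ) 1)) := by
  constructor
  rw [Measure.restrict_apply_univ, Real.volume_Ioo]
  norm_num

lemma extQ_integrable (q : Lp ℝ 2 μ01) : Integrable (extQ q) volume := by
  have h1 : Integrable ((q : ℝ → ℝ)) μ01 := (Lp.memLp q).integrable (by norm_num)
  exact ((integrable_indicator_iff measurableSet_Ioo).2 h1).ofReal

lemma int_norm_le (v : Lp ℝ 2 μ01) : ∫ x, ‖(v : ℝ → ℝ) x‖ ∂μ01 ≤ ‖v‖ := by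
  have hm : AEStronglyMeasurable (v : ℝ → ℝ) μ01 := (Lp.memLp v).aestronglyMeasurable
  rw [integral_norm_eq_lintegral_enorm hm]
  have h1 : eLpNorm (v : ℝ → ℝ) 1 μ01 ≤ eLpNorm (v : ℝ → ℝ) 2 μ01 :=
    eLpNorm_le_eLpNorm_of_exponent_le (by norm_num) hm
  rw [eLpNorm_one_eq_lintegral_enorm] at h1
  have h2 := ENNReal.toReal_mono (Lp.eLpNorm_ne_top v) h1
  rw [Lp.norm_def]
  exact h2

lemma extQ_sub_ae (q₁ q₀ : Lp ℝ 2 μ01) :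
    (fun x => extQ q₁ x - extQ q₀ x) =ᵐ[volume] extQ (q₁ - q₀) := by
  have h : ((q₁ - q₀ : Lp ℝ 2 μ01) : ℝ → ℝ) =ᵐ[μ01] (q₁ : ℝ → ℝ) - (q₀ : ℝ → ℝ) :=
    Lp.coeFn_sub q₁ q₀
  have h2 : ∀ᵐ x ∂volume, x ∈ Ioo (0:ℝ) 1 →
      ((q₁ - q₀ : Lp ℝ 2 μ01) : ℝ → ℝ) x = (q₁ : ℝ → ℝ) x - (q₀ : ℝ → ℝ) x :=
    (ae_restrict_iff' measurableSet_Ioo).1 (h.mono fun x hx => by simpa using hx)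
  filter_upwards [h2] with x hx
  by_cases hmem : x ∈ Ioo (0:ℝ) 1
  · simp only [extQ, indicator_of_mem hmem, hx hmem, Pi.sub_apply]
    push_cast
    ring
  · simp [extQ, indicator_of_notMem hmem]

lemma intH_le (q₁ q₀ : Lp ℝ 2 μ01) :
    ∫ t in (0:ℝ)..1, ‖extQ q₁ t - extQ q₀ t‖ ≤ ‖q₁ - q₀‖ := by
  rw [intervalIntegral.integral_of_le (by norm_num : (0:ℝ) ≤ 1)]
  have hae : (fun t => ‖extQ q₁ t - extQ q₀ t‖) =ᵐ[volume.restrict (Ioc (0:ℝ) 1)]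
      (fun t => ‖extQ (q₁ - q₀) t‖) :=
    ae_restrict_of_ae ((extQ_sub_ae q₁ q₀).mono fun x hx => by
      simpa using congrArg norm hx)
  rw [integral_congr_ae hae, integral_Ioc_eq_integral_Ioo]
  have heq : ∀ x ∈ Ioo (0:ℝ) 1, ‖extQ (q₁ - q₀) x‖ = ‖((q₁ - q₀ : Lp ℝ 2 μ01) : ℝ → ℝ) x‖ := by
    intro x hx
    simp [extQ, indicator_of_mem hx, Complex.norm_real]
  rw [setIntegral_congr_fun measurableSet_Ioo heq]
  exact int_norm_le (q₁ - q₀)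

lemma extQ_norm_integrableOn (q : Lp ℝ 2 μ01) {s : Set ℝ} :
    IntegrableOn (fun t => ‖extQ q t‖) s volume :=
  ((extQ_integrable q).norm).integrableOn

/-- continuity of the primitive-represented derivative -/
lemma primitive_contOn {y' y'' : ℝ → ℂ} (hint : IntegrableOn y'' (Icc 0 1))
    (hrep : ∀ x : ℝ, 0 ≤ x → y' x = y' 0 + ∫ t in (0:ℝ)..x, y'' t) :
    ContinuousOn y' (Icc 0 1) := by
  have h := (intervalIntegral.continuousOn_primitive (μ := volume) hint).add
      (continuousOn_const (c := y' 0))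
  apply h.congr
  intro x hx
  rw [hrep x hx.1, intervalIntegral.integral_of_le hx.1]
  simp [add_comm]

/-- FTC for the function itself -/
lemma sol_ftc {y y' : ℝ → ℂ} (hy : ∀ x : ℝ, 0 ≤ x → HasDerivAt y (y' x) x)
    (hcont : ContinuousOn y' (Icc 0 1)) {a b : ℝ} (ha : a ∈ Icc (0:ℝ) 1)
    (hb : b ∈ Icc (0:ℝ) 1) :
    ∫ t in a..b, y' t = y b - y a := by
  have hsub : uIcc a b ⊆ Icc (0:ℝ) 1 := uIcc_subset_Icc ha hb
  exact intervalIntegral.integral_eq_sub_of_hasDerivAt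
    (fun x hx => hy x (hsub hx).1)
    ((hcont.mono hsub).intervalIntegrable)

/-- FTC for the derivative -/
lemma sol_ftc' {y' y'' : ℝ → ℂ} (hint : IntegrableOn y'' (Icc 0 1))
    (hrep : ∀ x ∈ Icc (0:ℝ) 1, y' x = y' 0 + ∫ t in (0:ℝ)..x, y'' t)
    {a b : ℝ} (ha : a ∈ Icc (0:ℝ) 1) (hb : b ∈ Icc (0:ℝ) 1) :
    ∫ t in a..b, y'' t = y' b - y' a := by
  have hia : IntervalIntegrable y'' volume 0 a :=
    (hint.mono_set (by rw [uIcc_of_le ha.1]; exact Icc_subset_Icc le_rfl ha.2)).intervalIntegrable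
  have hib : IntervalIntegrable y'' volume 0 b :=
    (hint.mono_set (by rw [uIcc_of_le hb.1]; exact Icc_subset_Icc le_rfl hb.2)).intervalIntegrable
  rw [hrep a ha, hrep b hb]
  rw [← intervalIntegral.integral_interval_sub_left hib hia]
  ring

lemma cexp_hasDerivAt (k : ℂ) (x : ℝ) :
    HasDerivAt (fun t : ℝ => Complex.exp (Complex.I * k * (t : ℂ)))
      (Complex.I * k * Complex.exp (Complex.I * k * (x : ℂ))) x := by
  have h0 : HasDerivAt (fun t : ℝ => (t : ℂ)) 1 x := by
    simpa using (hasDerivAt_id x).ofReal_comp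
  have h1 : HasDerivAt (fun t : ℝ => Complex.I * k * (t : ℂ)) (Complex.I * k) x := by
    simpa using h0.const_mul (Complex.I * k)
  simpa [mul_comm] using h1.cexp

lemma jost_at_one {q : ℝ → ℂ} {k : ℂ} {f f' : ℝ → ℂ} (hJ : IsJost q k f f') :
    f 1 = Complex.exp (Complex.I * k) ∧
      f' 1 = Complex.I * k * Complex.exp (Complex.I * k) := by
  have h1 : f 1 = Complex.exp (Complex.I * k) := by simpa using hJ.2 1 le_rfl
  refine ⟨h1, ?_⟩
  have hd : HasDerivAt f (f' 1) 1 := hJ.1.1 1 (by norm_num)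
  have hE := cexp_hasDerivAt k 1
  have huniq : UniqueDiffWithinAt ℝ (Ici (1:ℝ)) 1 := (uniqueDiffOn_Ici 1) 1 Set.self_mem_Ici
  have hfw : HasDerivWithinAt f (f' 1) (Ici (1:ℝ)) 1 := hd.hasDerivWithinAt
  have hEw : HasDerivWithinAt f (Complex.I * k * Complex.exp (Complex.I * k * ((1:ℝ) : ℂ)))
      (Ici (1:ℝ)) 1 :=
    hE.hasDerivWithinAt.congr (fun x hx => (hJ.2 x hx)) (hJ.2 1 le_rfl)
  have := hfw.derivWithin huniq
  have h2 := hEw.derivWithin huniq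
  rw [this] at h2
  simpa using h2

lemma primitive_contOn' {u : ℝ → ℂ} (hu : IntegrableOn u (Icc 0 1) volume) (c : ℂ) :
    ContinuousOn (fun x => c + ∫ t in (0:ℝ)..x, u t) (Icc 0 1) := by
  have h := (continuousOn_const (c := c)).add
    (intervalIntegral.continuousOn_primitive (μ := volume) hu)
  apply h.congr
  intro x hx
  simp only [intervalIntegral.integral_of_le hx.1, Pi.add_apply]

lemma intOn_mul_cont {u V : ℝ → ℂ} (hu : IntegrableOn u (Ioc (0:ℝ) 1))
    (hVc : ContinuousOn V (Icc 0 1)) :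
    IntegrableOn (fun t => V t * u t) (Ioc (0:ℝ) 1) := by
  obtain ⟨M, hM⟩ := isCompact_Icc.exists_bound_of_continuousOn hVc
  refine Integrable.bdd_mul (c := M) hu ?_ ?_
  · exact (hVc.mono Ioc_subset_Icc_self).aestronglyMeasurable measurableSet_Ioc
  · exact (ae_restrict_iff' measurableSet_Ioc).2
      (ae_of_all _ fun x hx => hM x (Ioc_subset_Icc_self hx))

lemma parts {U V u v : ℝ → ℂ}
    (hu : IntegrableOn u (Icc (0:ℝ) 1)) (hv : IntegrableOn v (Icc (0:ℝ) 1))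
    (hU : ∀ x ∈ Icc (0:ℝ) 1, U x = U 0 + ∫ t in (0:ℝ)..x, u t)
    (hV : ∀ x ∈ Icc (0:ℝ) 1, V x = V 0 + ∫ t in (0:ℝ)..x, v t) :
    ∫ t in (0:ℝ)..1, (u t * V t + U t * v t) = U 1 * V 1 - U 0 * V 0 := by
  have huo : IntegrableOn u (Ioc (0:ℝ) 1) := hu.mono_set Ioc_subset_Icc_self
  have hvo : IntegrableOn v (Ioc (0:ℝ) 1) := hv.mono_set Ioc_subset_Icc_self
  have hUc : ContinuousOn U (Icc 0 1) := (primitive_contOn' hu (U 0)).congr hU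
  have hVc : ContinuousOn V (Icc 0 1) := (primitive_contOn' hv (V 0)).congr hV
  -- primitives
  set P : ℝ → ℂ := fun x => ∫ t in Ioc (0:ℝ) x, u t with hP
  set R : ℝ → ℂ := fun x => ∫ t in Ioc (0:ℝ) x, v t with hR
  have hPc : ContinuousOn P (Icc 0 1) := intervalIntegral.continuousOn_primitive hu
  have hRc : ContinuousOn R (Icc 0 1) := intervalIntegral.continuousOn_primitive hv
  -- interval integral to set integral
  rw [intervalIntegral.integral_of_le (by norm_num : (0:ℝ) ≤ 1)]
  -- integrability of products
  have huV : IntegrableOn (fun t => u t * V t) (Ioc (0:ℝ) 1) := by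
    have := intOn_mul_cont huo hVc
    simpa [mul_comm] using this
  have hUv : IntegrableOn (fun t => U t * v t) (Ioc (0:ℝ) 1) := intOn_mul_cont hvo hUc
  have huP : IntegrableOn (fun t => u t * P t) (Ioc (0:ℝ) 1) := by
    have := intOn_mul_cont huo hPc
    simpa [mul_comm] using this
  have hPv : IntegrableOn (fun t => P t * v t) (Ioc (0:ℝ) 1) := intOn_mul_cont hvo hPc
  rw [integral_add huV hUv]
  -- step 2 : ∫ u V = V 0 * ∫ u + I₂
  have step2 : ∫ t in Ioc (0:ℝ) 1, u t * V t =
      V 0 * (∫ t in Ioc (0:ℝ) 1, u t) + ∫ t in Ioc (0:ℝ) 1, u t * R t := by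
    have h1 : ∀ t ∈ Ioc (0:ℝ) 1, u t * V t = u t * V 0 + u t * R t := by
      intro t ht
      rw [hV t (Ioc_subset_Icc_self ht), intervalIntegral.integral_of_le ht.1.le]
      ring
    rw [setIntegral_congr_fun measurableSet_Ioc h1,
      integral_add (huo.mul_const _) ((intOn_mul_cont huo hRc).congr_fun (fun t _ => mul_comm _ _) measurableSet_Ioc),
      integral_mul_const]
    ring
  -- step 4 : ∫ U v = U 0 * ∫ v + J₂
  have step4 : ∫ t in Ioc (0:ℝ) 1, U t * v t =
      U 0 * (∫ t in Ioc (0:ℝ) 1, v t) + ∫ t in Ioc (0:ℝ) 1, P t * v t := by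
    have h1 : ∀ t ∈ Ioc (0:ℝ) 1, U t * v t = U 0 * v t + P t * v t := by
      intro t ht
      rw [hU t (Ioc_subset_Icc_self ht), intervalIntegral.integral_of_le ht.1.le]
      ring
    rw [setIntegral_congr_fun measurableSet_Ioc h1,
      integral_add ((hvo.const_mul _)) hPv, integral_const_mul]
  -- step 3 : Fubini swap
  have step3 : ∫ t in Ioc (0:ℝ) 1, u t * R t =
      ∫ s in Ioc (0:ℝ) 1, (∫ t in Ioc s 1, u t) * v s := by
    set ν := volume.restrict (Ioc (0:ℝ) 1)
    have hS : MeasurableSet {p : ℝ × ℝ | p.2 < p.1} :=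
      measurableSet_lt measurable_snd measurable_fst
    set F : ℝ × ℝ → ℂ := {p : ℝ × ℝ | p.2 < p.1}.indicator (fun p => u p.1 * v p.2) with hF
    have hFint : Integrable F (ν.prod ν) := (huo.mul_prod hvo).indicator hS
    have inner1 : ∀ t ∈ Ioc (0:ℝ) 1, (∫ s, F (t, s) ∂ν) = u t * R t := by
      intro t ht
      have h1 : ∀ s, F (t, s) = (Iio t).indicator (fun s => u t * v s) s := by
        intro s
        by_cases hst : s < t <;> simp [hF, indicator, hst]
      simp_rw [h1]
      rw [integral_indicator measurableSet_Iio, Measure.restrict_restrict measurableSet_Iio]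
      have : Iio t ∩ Ioc (0:ℝ) 1 = Ioo 0 t := by
        ext s
        constructor
        · rintro ⟨hs1, hs2, _⟩; exact ⟨hs2, hs1⟩
        · rintro ⟨hs1, hs2⟩; exact ⟨hs2, hs1, le_trans hs2.le ht.2⟩
      rw [this, integral_const_mul, hR, ← integral_Ioc_eq_integral_Ioo]
    have inner2 : ∀ s ∈ Ioc (0:ℝ) 1, (∫ t, F (t, s) ∂ν) = (∫ t in Ioc s 1, u t) * v s := by
      intro s hs
      have h1 : ∀ t, F (t, s) = (Ioi s).indicator (fun t => u t * v s) t := by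
        intro t
        by_cases hst : s < t <;> simp [hF, indicator, hst]
      have hset : Ioi s ∩ Ioc (0:ℝ) 1 = Ioc s 1 := by
        ext t
        constructor
        · rintro ⟨ht1, _, ht2⟩; exact ⟨ht1, ht2⟩
        · rintro ⟨ht1, ht2⟩; exact ⟨ht1, lt_trans hs.1 ht1, ht2⟩
      simp_rw [h1]
      rw [integral_indicator measurableSet_Ioi, Measure.restrict_restrict measurableSet_Ioi,
        hset, integral_mul_const]
    calc ∫ t in Ioc (0:ℝ) 1, u t * R t = ∫ t, ∫ s, F (t, s) ∂ν ∂ν :=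
          (setIntegral_congr_fun measurableSet_Ioc inner1).symm
      _ = ∫ s, ∫ t, F (t, s) ∂ν ∂ν := integral_integral_swap hFint
      _ = ∫ s in Ioc (0:ℝ) 1, (∫ t in Ioc s 1, u t) * v s :=
          setIntegral_congr_fun measurableSet_Ioc inner2
  -- step 5 : recombine
  have hQc : ContinuousOn (fun s => ∫ t in Ioc s 1, u t) (Icc 0 1) := by
    have : ∀ s ∈ Icc (0:ℝ) 1, (∫ t in Ioc s 1, u t) = (∫ t in Ioc (0:ℝ) 1, u t) - P s := by
      intro s hs
      have h1 : IntervalIntegrable u volume 0 s :=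
        (hu.mono_set (by rw [uIcc_of_le hs.1]; exact Icc_subset_Icc le_rfl hs.2)).intervalIntegrable
      have h2 : IntervalIntegrable u volume s 1 :=
        (hu.mono_set (by rw [uIcc_of_le hs.2]; exact Icc_subset_Icc hs.1 le_rfl)).intervalIntegrable
      have h3 := intervalIntegral.integral_add_adjacent_intervals h1 h2
      rw [intervalIntegral.integral_of_le hs.1, intervalIntegral.integral_of_le hs.2,
        intervalIntegral.integral_of_le (by norm_num : (0:ℝ) ≤ 1)] at h3
      simp only [hP]
      linear_combination h3
    exact (ContinuousOn.sub continuousOn_const hPc).congr this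
  have step5 : (∫ t in Ioc (0:ℝ) 1, u t * R t) + ∫ t in Ioc (0:ℝ) 1, P t * v t =
      (∫ t in Ioc (0:ℝ) 1, u t) * ∫ t in Ioc (0:ℝ) 1, v t := by
    rw [step3, ← integral_add (intOn_mul_cont hvo hQc) hPv]
    have h1 : ∀ s ∈ Ioc (0:ℝ) 1,
        (∫ t in Ioc s 1, u t) * v s + P s * v s = (∫ t in Ioc (0:ℝ) 1, u t) * v s := by
      intro s hs
      have hs' : s ∈ Icc (0:ℝ) 1 := Ioc_subset_Icc_self hs
      have h1 : IntervalIntegrable u volume 0 s :=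
        (hu.mono_set (by rw [uIcc_of_le hs'.1]; exact Icc_subset_Icc le_rfl hs'.2)).intervalIntegrable
      have h2 : IntervalIntegrable u volume s 1 :=
        (hu.mono_set (by rw [uIcc_of_le hs'.2]; exact Icc_subset_Icc hs'.1 le_rfl)).intervalIntegrable
      have h3 := intervalIntegral.integral_add_adjacent_intervals h1 h2
      rw [intervalIntegral.integral_of_le hs'.1, intervalIntegral.integral_of_le hs'.2,
        intervalIntegral.integral_of_le (by norm_num : (0:ℝ) ≤ 1)] at h3
      simp only [hP]
      linear_combination v s * h3
    rw [setIntegral_congr_fun measurableSet_Ioc h1, integral_const_mul]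
  -- assemble
  have hU1 : ∫ t in Ioc (0:ℝ) 1, u t = U 1 - U 0 := by
    rw [← intervalIntegral.integral_of_le (by norm_num : (0:ℝ) ≤ 1)]
    have := hU 1 (by norm_num)
    rw [this]; ring
  have hV1 : ∫ t in Ioc (0:ℝ) 1, v t = V 1 - V 0 := by
    rw [← intervalIntegral.integral_of_le (by norm_num : (0:ℝ) ≤ 1)]
    have := hV 1 (by norm_num)
    rw [this]; ring
  have := step5
  rw [step2, step4]
  rw [hU1, hV1] at this ⊢
  linear_combination this

/-- recursive constants for the Grönwall bound -/
def Dgr : ℕ → ℝ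
  | 0 => 1
  | (i+1) => 2 + i * Dgr i

lemma Dgr_one_le : ∀ i, 1 ≤ Dgr i := by
  intro i
  induction i with
  | zero => simp [Dgr]
  | succ i ih =>
    have : (0:ℝ) ≤ i * Dgr i := mul_nonneg (Nat.cast_nonneg i) (by linarith)
    simp only [Dgr]; linarith

lemma Dgr_mono_succ (i : ℕ) : Dgr i ≤ Dgr (i+1) := by
  have h1 := Dgr_one_le i
  rcases Nat.eq_zero_or_pos i with h | h
  · subst h; norm_num [Dgr]
  · have : (1:ℝ) ≤ i := by exact_mod_cast h
    simp only [Dgr]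
    nlinarith

lemma gronwall {g u : ℝ → ℝ} (hg : IntegrableOn g (Icc 0 1) volume)
    (hg0 : ∀ t, 0 ≤ g t)
    (hu : ContinuousOn u (Icc 0 1)) (hu0 : ∀ x ∈ Icc (0:ℝ) 1, 0 ≤ u x)
    {A : ℝ} (hA : 0 ≤ A)
    (hineq : ∀ x ∈ Icc (0:ℝ) 1, u x ≤ A + ∫ t in x..1, g t * u t)
    {N : ℕ} (hN : (∫ t in (0:ℝ)..1, g t) ≤ N / 2) :
    ∀ x ∈ Icc (0:ℝ) 1, u x ≤ A * Dgr N := by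
  -- integrability of g on subintervals
  have hgii : ∀ a b : ℝ, a ∈ Icc (0:ℝ) 1 → b ∈ Icc (0:ℝ) 1 → IntervalIntegrable g volume a b :=
    fun a b ha hb => (hg.mono_set (uIcc_subset_Icc ha hb)).intervalIntegrable
  -- bound for u
  obtain ⟨M, hM⟩ := isCompact_Icc.exists_bound_of_continuousOn hu
  have hMu : ∀ x ∈ Icc (0:ℝ) 1, u x ≤ M := fun x hx => (le_abs_self _).trans
    (by simpa [Real.norm_eq_abs] using hM x hx)
  -- integrability of g * u
  have hgu : IntegrableOn (fun t => g t * u t) (Icc 0 1) volume := by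
    have := Integrable.bdd_mul (c := M) (μ := volume.restrict (Icc (0:ℝ) 1)) hg
      (hu.aestronglyMeasurable measurableSet_Icc)
      ((ae_restrict_iff' measurableSet_Icc).2 (ae_of_all _ fun x hx => hM x hx))
    exact this.congr (ae_of_all _ fun x => mul_comm _ _)
  have hguii : ∀ a b : ℝ, a ∈ Icc (0:ℝ) 1 → b ∈ Icc (0:ℝ) 1 →
      IntervalIntegrable (fun t => g t * u t) volume a b :=
    fun a b ha hb => (hgu.mono_set (uIcc_subset_Icc ha hb)).intervalIntegrable
  -- G and its properties
  set G : ℝ → ℝ := fun x => ∫ t in x..1, g t with hGdef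
  have hGsplit : ∀ a b : ℝ, a ∈ Icc (0:ℝ) 1 → b ∈ Icc (0:ℝ) 1 →
      G a = (∫ t in a..b, g t) + G b := fun a b ha hb =>
    (intervalIntegral.integral_add_adjacent_intervals (hgii a b ha hb) (hgii b 1 hb (by norm_num))).symm
  have hGanti : ∀ a b : ℝ, a ∈ Icc (0:ℝ) 1 → b ∈ Icc (0:ℝ) 1 → a ≤ b → G b ≤ G a := by
    intro a b ha hb hab
    rw [hGsplit a b ha hb]
    have : 0 ≤ ∫ t in a..b, g t :=
      intervalIntegral.integral_nonneg hab (fun t _ => hg0 t)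
    linarith
  have hG1 : G 1 = 0 := intervalIntegral.integral_same
  have hG0 : ∀ x ∈ Icc (0:ℝ) 1, 0 ≤ G x := by
    intro x hx
    have := hGanti x 1 hx (by norm_num) hx.2
    rw [hG1] at this; linarith
  have hGcont : ContinuousOn G (Icc 0 1) := by
    have hprim := intervalIntegral.continuousOn_primitive (μ := volume) (a := (0:ℝ)) (b := 1) hg
    have : ContinuousOn (fun x => (∫ t in (0:ℝ)..1, g t) - ∫ t in Ioc (0:ℝ) x, g t) (Icc 0 1) :=
      continuousOn_const.sub hprim
    apply this.congr
    intro x hx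
    simp only
    have h0 : G 0 = (∫ t in (0:ℝ)..x, g t) + G x := hGsplit 0 x (by norm_num) hx
    have h1 : G 0 = ∫ t in (0:ℝ)..1, g t := rfl
    rw [← intervalIntegral.integral_of_le hx.1]
    linarith
  -- bound on integrals of g * u
  have key : ∀ a b : ℝ, a ∈ Icc (0:ℝ) 1 → b ∈ Icc (0:ℝ) 1 → a ≤ b → ∀ C : ℝ, 0 ≤ C →
      (∀ t ∈ Icc a b, u t ≤ C) → (∫ t in a..b, g t * u t) ≤ C * (G a - G b) := by
    intro a b ha hb hab C hC hCb
    have h1 : (∫ t in a..b, g t * u t) ≤ ∫ t in a..b, g t * C := by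
      apply intervalIntegral.integral_mono_on hab (hguii a b ha hb)
        ((hgii a b ha hb).mul_const C)
      intro t ht
      exact mul_le_mul_of_nonneg_left (hCb t ht) (hg0 t)
    have h2 : (∫ t in a..b, g t * C) = C * (G a - G b) := by
      rw [intervalIntegral.integral_mul_const]
      have h3 := hGsplit a b ha hb
      linear_combination -C * h3
    linarith
  -- main induction
  have main : ∀ i : ℕ, ∀ x ∈ Icc (0:ℝ) 1, G x ≤ i / 2 → u x ≤ A * Dgr i := by
    intro i
    induction i with
    | zero =>
      intro x hx hGx
      have hGx0 : G x = 0 := le_antisymm (by simpa using hGx) (hG0 x hx)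
      have h1 := hineq x hx
      have h2 := key x 1 hx (by norm_num) hx.2 (max M 0) (le_max_right _ _)
        (fun t ht => (hMu t ⟨le_trans hx.1 ht.1, ht.2⟩).trans (le_max_left _ _))
      rw [hGx0, hG1] at h2
      simp only [Dgr]
      have := hu0 x hx
      linarith
    | succ i ih =>
      intro x hx hGx
      -- the region R and its max
      set R : Set ℝ := Icc (0:ℝ) 1 ∩ G ⁻¹' (Iic (((i:ℝ)+1) / 2)) with hRdef
      have hRclosed : IsClosed R :=
        ContinuousOn.preimage_isClosed_of_isClosed hGcont isClosed_Icc isClosed_Iic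
      have hRcomp : IsCompact R := isCompact_Icc.of_isClosed_subset hRclosed inter_subset_left
      have hRne : R.Nonempty := ⟨1, ⟨by norm_num, by simp [hG1]; positivity⟩⟩
      obtain ⟨xs, hxsR, hxsmax⟩ := hRcomp.exists_isMaxOn hRne (hu.mono inter_subset_left)
      have hxmem : x ∈ R := ⟨hx, by
        simp only [mem_preimage, mem_Iic]
        push_cast at hGx
        linarith⟩
      have hux : u x ≤ u xs := hxsmax hxmem
      have hxs1 : xs ∈ Icc (0:ℝ) 1 := hxsR.1
      have hGxs : G xs ≤ ((i:ℝ)+1)/2 := by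
        have := hxsR.2
        simpa using this
      have hfinal : u xs ≤ A * Dgr (i+1) := by
        by_cases hc : G xs ≤ i / 2
        · exact (ih xs hxs1 hc).trans
            (mul_le_mul_of_nonneg_left (Dgr_mono_succ i) hA)
        · push_neg at hc
          -- IVT to find c with G c = i/2
          have hsub : Icc xs 1 ⊆ Icc (0:ℝ) 1 := Icc_subset_Icc hxs1.1 le_rfl
          have hIVT := intermediate_value_Icc' hxs1.2 (hGcont.mono hsub)
          have hmem2 : (i/2 : ℝ) ∈ Icc (G 1) (G xs) := by
            rw [hG1]
            exact ⟨by positivity, hc.le⟩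
          obtain ⟨c, hcmem, hGc⟩ := hIVT hmem2
          have hc1 : c ∈ Icc (0:ℝ) 1 := hsub hcmem
          -- split the integral
          have hxsc : xs ≤ c := hcmem.1
          have h1 := hineq xs hxs1
          have hsplit : (∫ t in xs..1, g t * u t) =
              (∫ t in xs..c, g t * u t) + ∫ t in c..1, g t * u t :=
            (intervalIntegral.integral_add_adjacent_intervals
              (hguii xs c hxs1 hc1) (hguii c 1 hc1 (by norm_num))).symm
          have hb1 : (∫ t in xs..c, g t * u t) ≤ u xs * (G xs - G c) := by
            apply key xs c hxs1 hc1 hxsc (u xs) (hu0 xs hxs1)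
            intro t ht
            have htR : t ∈ R := ⟨⟨le_trans hxs1.1 ht.1, le_trans ht.2 hc1.2⟩, by
              simp only [mem_preimage, mem_Iic]
              exact le_trans (hGanti xs t hxs1 ⟨le_trans hxs1.1 ht.1, le_trans ht.2 hc1.2⟩ ht.1) hGxs⟩
            exact hxsmax htR
          have hb2 : (∫ t in c..1, g t * u t) ≤ (A * Dgr i) * (G c - G 1) := by
            apply key c 1 hc1 (by norm_num) hc1.2 (A * Dgr i)
              (mul_nonneg hA (by linarith [Dgr_one_le i]))
            intro t ht
            have ht1 : t ∈ Icc (0:ℝ) 1 := ⟨le_trans hc1.1 ht.1, ht.2⟩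
            apply ih t ht1
            calc G t ≤ G c := hGanti c t hc1 ht1 ht.1
              _ = i/2 := hGc
          have hGdiff : G xs - G c ≤ 1/2 := by
            rw [hGc]
            push_cast at hGxs ⊢
            linarith
          have huxs0 : 0 ≤ u xs := hu0 xs hxs1
          have hGG : u xs * (G xs - G c) ≤ u xs * (1/2) :=
            mul_le_mul_of_nonneg_left hGdiff huxs0
          rw [hG1, hGc] at hb2
          have hD : Dgr (i+1) = 2 + i * Dgr i := rfl
          have hfin : u xs ≤ A + u xs * (1/2) + (A * Dgr i) * (i/2) := by
            calc u xs ≤ A + ∫ t in xs..1, g t * u t := h1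
              _ = A + ((∫ t in xs..c, g t * u t) + ∫ t in c..1, g t * u t) := by rw [hsplit]
              _ ≤ A + (u xs * (G xs - G c) + (A * Dgr i) * (i/2 - 0)) := by
                  have := add_le_add hb1 hb2
                  linarith
              _ ≤ A + (u xs * (1/2) + (A * Dgr i) * (i/2)) := by linarith
              _ = A + u xs * (1/2) + (A * Dgr i) * (i/2) := by ring
          rw [hD]
          nlinarith
      exact hux.trans hfinal
  intro x hx
  apply main N x hx
  calc G x ≤ G 0 := hGanti 0 x (by norm_num) hx hx.1
    _ ≤ N / 2 := hN

lemma ii_mul_cont {u V : ℝ → ℂ} (hu : IntegrableOn u (Icc (0:ℝ) 1) volume)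
    (hV : ContinuousOn V (Icc 0 1)) :
    IntervalIntegrable (fun t => u t * V t) volume 0 1 := by
  rw [intervalIntegrable_iff, uIoc_of_le (by norm_num : (0:ℝ) ≤ 1)]
  simpa [mul_comm] using intOn_mul_cont (hu.mono_set Ioc_subset_Icc_self) hV

lemma ii_cont_mul {u V : ℝ → ℂ} (hu : IntegrableOn u (Icc (0:ℝ) 1) volume)
    (hV : ContinuousOn V (Icc 0 1)) :
    IntervalIntegrable (fun t => V t * u t) volume 0 1 := by
  rw [intervalIntegrable_iff, uIoc_of_le (by norm_num : (0:ℝ) ≤ 1)]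
  exact intOn_mul_cont (hu.mono_set Ioc_subset_Icc_self) hV

lemma sol_pack {Q : ℝ → ℂ} {E : ℂ} {y y' : ℝ → ℂ} (hS : SchrodingerSol Q E y y') :
    ∃ y'' : ℝ → ℂ, IntegrableOn y'' (Icc 0 1) volume ∧
      ContinuousOn y (Icc 0 1) ∧ ContinuousOn y' (Icc 0 1) ∧
      (∀ x ∈ Icc (0:ℝ) 1, y x = y 0 + ∫ t in (0:ℝ)..x, y' t) ∧
      (∀ x ∈ Icc (0:ℝ) 1, y' x = y' 0 + ∫ t in (0:ℝ)..x, y'' t) ∧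
      (∀ᵐ x : ℝ, 0 ≤ x → y'' x = (Q x - E) * y x) := by
  obtain ⟨hy, y'', hint, hrep, hae⟩ := hS
  have h1 : IntegrableOn y'' (Icc 0 1) volume := hint 1
  have hy'c : ContinuousOn y' (Icc 0 1) := primitive_contOn h1 hrep
  refine ⟨y'', h1, ?_, hy'c, ?_, fun x hx => hrep x hx.1, ?_⟩
  · exact fun x hx => (hy x hx.1).continuousAt.continuousWithinAt
  · intro x hx
    have h := sol_ftc hy hy'c (a := 0) ⟨le_rfl, zero_le_one⟩ hx
    linear_combination -h
  · refine hae.mono fun x hx h0 => ?_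
    have h := hx h0
    linear_combination -h

lemma green {φ0 φd F Fd : ℝ → ℂ} {φdd Fdd : ℝ → ℂ}
    (hφdd : IntegrableOn φdd (Icc 0 1) volume) (hFdd : IntegrableOn Fdd (Icc 0 1) volume)
    (hφrep : ∀ x ∈ Icc (0:ℝ) 1, φ0 x = φ0 0 + ∫ t in (0:ℝ)..x, φd t)
    (hφdrep : ∀ x ∈ Icc (0:ℝ) 1, φd x = φd 0 + ∫ t in (0:ℝ)..x, φdd t)
    (hFrep : ∀ x ∈ Icc (0:ℝ) 1, F x = F 0 + ∫ t in (0:ℝ)..x, Fd t)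
    (hFdrep : ∀ x ∈ Icc (0:ℝ) 1, Fd x = Fd 0 + ∫ t in (0:ℝ)..x, Fdd t) :
    ∫ t in (0:ℝ)..1, (φdd t * F t - φ0 t * Fdd t) =
      (φd 1 * F 1 - φ0 1 * Fd 1) - (φd 0 * F 0 - φ0 0 * Fd 0) := by
  have hφdc : ContinuousOn φd (Icc 0 1) := (primitive_contOn' hφdd (φd 0)).congr hφdrep
  have hFdc : ContinuousOn Fd (Icc 0 1) := (primitive_contOn' hFdd (Fd 0)).congr hFdrep
  have hφdint : IntegrableOn φd (Icc 0 1) volume := hφdc.integrableOn_Icc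
  have hFdint : IntegrableOn Fd (Icc 0 1) volume := hFdc.integrableOn_Icc
  have hφc : ContinuousOn φ0 (Icc 0 1) := (primitive_contOn' hφdint (φ0 0)).congr hφrep
  have hFc : ContinuousOn F (Icc 0 1) := (primitive_contOn' hFdint (F 0)).congr hFrep
  have p1 := parts hφdd hFdint hφdrep hFrep
  have p2 := parts hφdint hFdd hφrep hFdrep
  have ii1 : IntervalIntegrable (fun t => φdd t * F t + φd t * Fd t) volume 0 1 :=
    (ii_mul_cont hφdd hFc).add (ii_mul_cont hφdint hFdc)
  have ii2 : IntervalIntegrable (fun t => φd t * Fd t + φ0 t * Fdd t) volume 0 1 :=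
    (ii_mul_cont hφdint hFdc).add (ii_cont_mul hFdd hφc)
  have hpt : (fun t => φdd t * F t - φ0 t * Fdd t) =
      (fun t => (φdd t * F t + φd t * Fd t) - (φd t * Fd t + φ0 t * Fdd t)) := by
    funext t; ring
  rw [hpt, intervalIntegral.integral_sub ii1 ii2, p1, p2]
  ring

/-- the key identity (★) -/
lemma star_id (k : ℂ) {q0 q1 : Lp ℝ 2 (volume.restrict (Ioo (0:ℝ) 1))}
    {f0 f0' f1 f1' φ0 φ0' : ℝ → ℂ}
    (hf0 : IsJost (extQ q0) k f0 f0') (hf1 : IsJost (extQ q1) k f1 f1')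
    (hφ0 : IsPhi (extQ q0) k φ0 φ0') :
    f1 0 - f0 0 =
      ∫ t in (0:ℝ)..1, (extQ q1 t - extQ q0 t) * (φ0 t * f1 t) := by
  obtain ⟨φdd, hφdd, hφc, hφdc, hφrep, hφdrep, hφae⟩ := sol_pack hφ0.1
  obtain ⟨F1dd, hF1dd, hF1c, hF1dc, hF1rep, hF1drep, hF1ae⟩ := sol_pack hf1.1
  obtain ⟨F0dd, hF0dd, hF0c, hF0dc, hF0rep, hF0drep, hF0ae⟩ := sol_pack hf0.1
  have g1 := green hφdd hF1dd hφrep hφdrep hF1rep hF1drep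
  have g0 := green hφdd hF0dd hφrep hφdrep hF0rep hF0drep
  have e1 : ∫ t in (0:ℝ)..1, (φdd t * f1 t - φ0 t * F1dd t) =
      ∫ t in (0:ℝ)..1, -((extQ q1 t - extQ q0 t) * (φ0 t * f1 t)) := by
    apply intervalIntegral.integral_congr_ae
    filter_upwards [hφae, hF1ae] with t h1 h2 ht
    rw [uIoc_of_le (by norm_num : (0:ℝ) ≤ 1)] at ht
    rw [h1 ht.1.le, h2 ht.1.le]
    ring
  have e0 : ∫ t in (0:ℝ)..1, (φdd t * f0 t - φ0 t * F0dd t) = 0 := by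
    have h : ∫ t in (0:ℝ)..1, (φdd t * f0 t - φ0 t * F0dd t) =
        ∫ t in (0:ℝ)..1, (0 : ℂ) := by
      apply intervalIntegral.integral_congr_ae
      filter_upwards [hφae, hF0ae] with t h1 h2 ht
      rw [uIoc_of_le (by norm_num : (0:ℝ) ≤ 1)] at ht
      rw [h1 ht.1.le, h2 ht.1.le]
      ring
    simpa using h
  obtain ⟨hb1, hb1'⟩ := jost_at_one hf1
  obtain ⟨hb0, hb0'⟩ := jost_at_one hf0
  rw [e1, intervalIntegral.integral_neg, hφ0.2.1, hφ0.2.2, hb1, hb1'] at g1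
  rw [e0, hφ0.2.1, hφ0.2.2, hb0, hb0'] at g0
  linear_combination g1 - g0

/-- a priori bound: Lipschitz continuity of `q ↦ f q` in sup norm on `[0,1]` -/
lemma jost_diff_bound (k : ℂ) (f f' : Lp ℝ 2 (volume.restrict (Ioo (0:ℝ) 1)) → ℝ → ℂ)
    (hf : ∀ q, IsJost (extQ q) k (f q) (f' q))
    (q₀ : Lp ℝ 2 (volume.restrict (Ioo (0:ℝ) 1))) :
    ∃ C : ℝ, 0 ≤ C ∧ ∀ q₁, ‖q₁ - q₀‖ ≤ 1 →
      ∀ x ∈ Icc (0:ℝ) 1, ‖f q₁ x - f q₀ x‖ ≤ C * ‖q₁ - q₀‖ := by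
  obtain ⟨F0dd, hF0dd, hF0c, hF0dc, hF0rep, hF0drep, hF0ae⟩ := sol_pack (hf q₀).1
  obtain ⟨Mf0, hMf0⟩ := isCompact_Icc.exists_bound_of_continuousOn hF0c
  set Mf : ℝ := max Mf0 0 with hMfdef
  have hMf : ∀ x ∈ Icc (0:ℝ) 1, ‖f q₀ x‖ ≤ Mf := fun x hx => (hMf0 x hx).trans (le_max_left _ _)
  have hMfpos : 0 ≤ Mf := le_max_right _ _
  set Γ : ℝ := (∫ t in (0:ℝ)..1, ‖extQ q₀ t‖) + 1 + ‖k ^ 2‖ with hΓdef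
  set N : ℕ := ⌈2 * Γ⌉₊ with hNdef
  refine ⟨Mf * Dgr N, mul_nonneg hMfpos (by linarith [Dgr_one_le N]), ?_⟩
  intro q₁ hq₁ x hx
  obtain ⟨F1dd, hF1dd, hF1c, hF1dc, hF1rep, hF1drep, hF1ae⟩ := sol_pack (hf q₁).1
  set H : ℝ → ℂ := fun t => extQ q₁ t - extQ q₀ t with hHdef
  set g : ℝ → ℝ := fun t => ‖extQ q₁ t - k ^ 2‖ with hgdef
  set u : ℝ → ℝ := fun t => ‖f q₁ t - f q₀ t‖ with hudef
  set A : ℝ := ∫ t in (0:ℝ)..1, ‖H t‖ * Mf with hAdef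
  have hHint : IntegrableOn (fun t => ‖H t‖) (Icc (0:ℝ) 1) volume :=
    (((extQ_integrable q₁).sub (extQ_integrable q₀)).norm).integrableOn
  have hgint : IntegrableOn g (Icc (0:ℝ) 1) volume := by
    apply Integrable.norm
    exact (extQ_integrable q₁).integrableOn.sub
      (integrableOn_const (by rw [Real.volume_Icc]; exact ENNReal.ofReal_ne_top))
  have hwc : ContinuousOn (fun t => f q₁ t - f q₀ t) (Icc 0 1) := hF1c.sub hF0c
  have huc : ContinuousOn u (Icc 0 1) := hwc.norm
  have hnwddint : IntegrableOn (fun t => ‖F1dd t - F0dd t‖) (Icc (0:ℝ) 1) volume :=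
    (hF1dd.sub hF0dd).norm
  obtain ⟨hb1, hb1'⟩ := jost_at_one (hf q₁)
  obtain ⟨hb0, hb0'⟩ := jost_at_one (hf q₀)
  have hw1 : f q₁ 1 - f q₀ 1 = 0 := by rw [hb1, hb0]; ring
  have hw1' : f' q₁ 1 - f' q₀ 1 = 0 := by rw [hb1', hb0']; ring
  have h1mem : (1:ℝ) ∈ Icc (0:ℝ) 1 := ⟨zero_le_one, le_rfl⟩
  -- step 1 : u y ≤ ∫ y..1 ‖w''‖
  have hstep1 : ∀ y ∈ Icc (0:ℝ) 1, u y ≤ ∫ t in y..1, ‖F1dd t - F0dd t‖ := by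
    intro y hy
    have hw'bound : ∀ t ∈ Icc y 1, ‖f' q₁ t - f' q₀ t‖ ≤ ∫ s in y..1, ‖F1dd s - F0dd s‖ := by
      intro t ht
      have ht1 : t ∈ Icc (0:ℝ) 1 := ⟨le_trans hy.1 ht.1, ht.2⟩
      have e1 := sol_ftc' hF1dd hF1drep ht1 h1mem
      have e0 := sol_ftc' hF0dd hF0drep ht1 h1mem
      have hii1 : IntervalIntegrable F1dd volume t 1 :=
        (hF1dd.mono_set (uIcc_subset_Icc ht1 h1mem)).intervalIntegrable
      have hii0 : IntervalIntegrable F0dd volume t 1 :=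
        (hF0dd.mono_set (uIcc_subset_Icc ht1 h1mem)).intervalIntegrable
      have heq : f' q₁ t - f' q₀ t = -∫ s in t..1, (F1dd s - F0dd s) := by
        rw [intervalIntegral.integral_sub hii1 hii0, e1, e0]
        linear_combination hw1'
      rw [heq, norm_neg]
      calc ‖∫ s in t..1, (F1dd s - F0dd s)‖ ≤ ∫ s in t..1, ‖F1dd s - F0dd s‖ :=
            intervalIntegral.norm_integral_le_integral_norm ht.2
        _ ≤ ∫ s in y..1, ‖F1dd s - F0dd s‖ := by
            have hiy : IntervalIntegrable (fun s => ‖F1dd s - F0dd s‖) volume y t :=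
              (hnwddint.mono_set (uIcc_subset_Icc hy ht1)).intervalIntegrable
            have hit : IntervalIntegrable (fun s => ‖F1dd s - F0dd s‖) volume t 1 :=
              (hnwddint.mono_set (uIcc_subset_Icc ht1 h1mem)).intervalIntegrable
            have hsplit := intervalIntegral.integral_add_adjacent_intervals hiy hit
            have hpos : 0 ≤ ∫ s in y..t, ‖F1dd s - F0dd s‖ :=
              intervalIntegral.integral_nonneg ht.1 (fun s _ => norm_nonneg _)
            linarith
    have hii1 : IntervalIntegrable (f' q₁) volume y 1 :=
      ((hF1dc.mono (uIcc_subset_Icc hy h1mem)).intervalIntegrable)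
    have hii0 : IntervalIntegrable (f' q₀) volume y 1 :=
      ((hF0dc.mono (uIcc_subset_Icc hy h1mem)).intervalIntegrable)
    have e1 := sol_ftc (hf q₁).1.1 hF1dc hy h1mem
    have e0 := sol_ftc (hf q₀).1.1 hF0dc hy h1mem
    have heq : f q₁ y - f q₀ y = -∫ t in y..1, (f' q₁ t - f' q₀ t) := by
      rw [intervalIntegral.integral_sub hii1 hii0, e1, e0]
      linear_combination hw1
    have hKnn : 0 ≤ ∫ s in y..1, ‖F1dd s - F0dd s‖ :=
      intervalIntegral.integral_nonneg hy.2 (fun s _ => norm_nonneg _)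
    calc u y = ‖∫ t in y..1, (f' q₁ t - f' q₀ t)‖ := by
          show ‖f q₁ y - f q₀ y‖ = _
          rw [heq, norm_neg]
      _ ≤ ∫ t in y..1, ‖f' q₁ t - f' q₀ t‖ :=
          intervalIntegral.norm_integral_le_integral_norm hy.2
      _ ≤ ∫ t in y..1, (∫ s in y..1, ‖F1dd s - F0dd s‖) := by
          apply intervalIntegral.integral_mono_on hy.2 ((hii1.sub hii0).norm)
            intervalIntegrable_const hw'bound
      _ = (1 - y) • (∫ s in y..1, ‖F1dd s - F0dd s‖) := intervalIntegral.integral_const _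
      _ ≤ ∫ s in y..1, ‖F1dd s - F0dd s‖ := by
          rw [smul_eq_mul]
          nlinarith [hy.1, hy.2]
  -- integrability of g * u
  have hguint : IntegrableOn (fun t => g t * u t) (Icc (0:ℝ) 1) volume := by
    obtain ⟨Mu, hMu⟩ := isCompact_Icc.exists_bound_of_continuousOn huc
    have h := Integrable.bdd_mul (c := Mu) (μ := volume.restrict (Icc (0:ℝ) 1)) hgint
      (huc.aestronglyMeasurable measurableSet_Icc)
      ((ae_restrict_iff' measurableSet_Icc).2 (ae_of_all _ fun t ht => hMu t ht))
    exact h.congr (ae_of_all _ fun x => mul_comm _ _)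
  -- step 2
  have hstep2 : ∀ y ∈ Icc (0:ℝ) 1,
      (∫ t in y..1, ‖F1dd t - F0dd t‖) ≤ A + ∫ t in y..1, g t * u t := by
    intro y hy
    have hmono : (∫ t in y..1, ‖F1dd t - F0dd t‖) ≤
        ∫ t in y..1, (g t * u t + ‖H t‖ * Mf) := by
      apply intervalIntegral.integral_mono_ae_restrict hy.2
        ((hnwddint.mono_set (uIcc_subset_Icc hy h1mem)).intervalIntegrable)
        ((IntegrableOn.mono_set (hguint.add (hHint.mul_const Mf))
          (uIcc_subset_Icc hy h1mem)).intervalIntegrable)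
      filter_upwards [ae_restrict_of_ae hF1ae, ae_restrict_of_ae hF0ae,
        ae_restrict_mem measurableSet_Icc] with t ht1' ht0' hmem
      have ht0 : (0:ℝ) ≤ t := le_trans hy.1 hmem.1
      have ht1 : t ∈ Icc (0:ℝ) 1 := ⟨ht0, hmem.2⟩
      have heq : F1dd t - F0dd t =
          (extQ q₁ t - k ^ 2) * (f q₁ t - f q₀ t) + H t * f q₀ t := by
        rw [ht1' ht0, ht0' ht0]
        show _ = _ * _ + (extQ q₁ t - extQ q₀ t) * _
        ring
      show ‖F1dd t - F0dd t‖ ≤ g t * u t + ‖H t‖ * Mf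
      rw [heq]
      calc ‖(extQ q₁ t - k ^ 2) * (f q₁ t - f q₀ t) + H t * f q₀ t‖ ≤
            ‖(extQ q₁ t - k ^ 2) * (f q₁ t - f q₀ t)‖ + ‖H t * f q₀ t‖ := norm_add_le _ _
        _ = g t * u t + ‖H t‖ * ‖f q₀ t‖ := by rw [norm_mul, norm_mul]
        _ ≤ g t * u t + ‖H t‖ * Mf := by
            have h := hMf t ht1
            nlinarith [norm_nonneg (H t)]
    have hit : IntervalIntegrable (fun t => ‖H t‖ * Mf) volume y 1 :=
      (IntegrableOn.mono_set (hHint.mul_const Mf) (uIcc_subset_Icc hy h1mem)).intervalIntegrable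
    have hsplitA : (∫ t in y..1, ‖H t‖ * Mf) ≤ A := by
      have hiy0 : IntervalIntegrable (fun t => ‖H t‖ * Mf) volume 0 y :=
        (IntegrableOn.mono_set (hHint.mul_const Mf)
          (by rw [uIcc_of_le hy.1]; exact Icc_subset_Icc le_rfl hy.2)).intervalIntegrable
      have hsplit := intervalIntegral.integral_add_adjacent_intervals hiy0 hit
      have hpos : 0 ≤ ∫ t in (0:ℝ)..y, ‖H t‖ * Mf :=
        intervalIntegral.integral_nonneg hy.1
          (fun t _ => mul_nonneg (norm_nonneg _) hMfpos)
      rw [hAdef]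
      linarith
    have hadd : (∫ t in y..1, (g t * u t + ‖H t‖ * Mf)) =
        (∫ t in y..1, g t * u t) + ∫ t in y..1, ‖H t‖ * Mf :=
      intervalIntegral.integral_add
        ((hguint.mono_set (uIcc_subset_Icc hy h1mem)).intervalIntegrable) hit
    linarith [hmono, hadd.le, hsplitA]
  -- Grönwall
  have hApos : 0 ≤ A := intervalIntegral.integral_nonneg zero_le_one
    (fun t _ => mul_nonneg (norm_nonneg _) hMfpos)
  have hintH_le : (∫ t in (0:ℝ)..1, ‖H t‖) ≤ ‖q₁ - q₀‖ := intH_le q₁ q₀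
  have hN : (∫ t in (0:ℝ)..1, g t) ≤ (N : ℝ) / 2 := by
    have hptw : ∀ t ∈ Icc (0:ℝ) 1, g t ≤ ‖extQ q₀ t‖ + ‖H t‖ + ‖k ^ 2‖ := by
      intro t _
      show ‖extQ q₁ t - k ^ 2‖ ≤ ‖extQ q₀ t‖ + ‖extQ q₁ t - extQ q₀ t‖ + ‖k ^ 2‖
      rw [show extQ q₁ t - k ^ 2 =
        extQ q₀ t + (extQ q₁ t - extQ q₀ t) + -(k ^ 2) from by ring]
      calc ‖extQ q₀ t + (extQ q₁ t - extQ q₀ t) + -(k ^ 2)‖ ≤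
            ‖extQ q₀ t + (extQ q₁ t - extQ q₀ t)‖ + ‖-(k ^ 2)‖ := norm_add_le _ _
        _ ≤ ‖extQ q₀ t‖ + ‖extQ q₁ t - extQ q₀ t‖ + ‖k ^ 2‖ := by
            rw [norm_neg]
            exact add_le_add_left (norm_add_le _ _) _
    have hint1 : IntervalIntegrable g volume 0 1 := by
      rw [intervalIntegrable_iff, uIoc_of_le zero_le_one]
      exact hgint.mono_set Ioc_subset_Icc_self
    have iiQ0 : IntervalIntegrable (fun t => ‖extQ q₀ t‖) volume 0 1 := by
      rw [intervalIntegrable_iff, uIoc_of_le zero_le_one]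
      exact (extQ_integrable q₀).norm.integrableOn
    have iiH : IntervalIntegrable (fun t => ‖H t‖) volume 0 1 := by
      rw [intervalIntegrable_iff, uIoc_of_le zero_le_one]
      exact hHint.mono_set Ioc_subset_Icc_self
    have hint2 : IntervalIntegrable (fun t => ‖extQ q₀ t‖ + ‖H t‖ + ‖k ^ 2‖) volume 0 1 :=
      (iiQ0.add iiH).add intervalIntegrable_const
    have hmono := intervalIntegral.integral_mono_on zero_le_one hint1 hint2 hptw
    have hadd1 : (∫ t in (0:ℝ)..1, (‖extQ q₀ t‖ + ‖H t‖ + ‖k ^ 2‖)) =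
        ((∫ t in (0:ℝ)..1, ‖extQ q₀ t‖) + ∫ t in (0:ℝ)..1, ‖H t‖) + ‖k ^ 2‖ := by
      rw [intervalIntegral.integral_add (iiQ0.add iiH) intervalIntegrable_const,
        intervalIntegral.integral_add iiQ0 iiH, intervalIntegral.integral_const]
      norm_num
    have hceil : 2 * Γ ≤ (N : ℝ) := by
      rw [hNdef]
      exact Nat.le_ceil _
    rw [hadd1] at hmono
    rw [hΓdef] at hceil
    linarith
  have hineq : ∀ y ∈ Icc (0:ℝ) 1, u y ≤ A + ∫ t in y..1, g t * u t :=
    fun y hy => (hstep1 y hy).trans (hstep2 y hy)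
  have hgr := gronwall hgint (fun t => norm_nonneg _) huc (fun y _ => norm_nonneg _)
    hApos hineq hN
  have hAle : A ≤ Mf * ‖q₁ - q₀‖ := by
    have hA2 : A = (∫ t in (0:ℝ)..1, ‖H t‖) * Mf := by
      rw [hAdef, intervalIntegral.integral_mul_const]
    rw [hA2]
    calc (∫ t in (0:ℝ)..1, ‖H t‖) * Mf ≤ ‖q₁ - q₀‖ * Mf :=
          mul_le_mul_of_nonneg_right hintH_le hMfpos
      _ = Mf * ‖q₁ - q₀‖ := mul_comm _ _
  calc ‖f q₁ x - f q₀ x‖ ≤ A * Dgr N := hgr x hx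
    _ ≤ (Mf * ‖q₁ - q₀‖) * Dgr N :=
        mul_le_mul_of_nonneg_right hAle (by linarith [Dgr_one_le N])
    _ = Mf * Dgr N * ‖q₁ - q₀‖ := by ring

/-- For fixed `k`, the map `q ↦ ψ(k,q)` is Fréchet differentiable on
`L²((0,1),ℝ)`, with derivative `h ↦ ∫₀¹ φ(x,k,q₀) f₊(x,k,q₀) h(x) dx` at `q₀`. -/
theorem statement17 (k : ℂ)
    (f f' φ φ' : Lp ℝ 2 (volume.restrict (Ioo (0:ℝ) 1)) → ℝ → ℂ)
    (hf : ∀ q, IsJost (extQ q) k (f q) (f' q))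
    (hφ : ∀ q, IsPhi (extQ q) k (φ q) (φ' q))
    (q₀ : Lp ℝ 2 (volume.restrict (Ioo (0:ℝ) 1))) :
    ∃ L : Lp ℝ 2 (volume.restrict (Ioo (0:ℝ) 1)) →L[ℝ] ℂ,
      (∀ h : Lp ℝ 2 (volume.restrict (Ioo (0:ℝ) 1)),
        L h = ∫ x in (0:ℝ)..1, φ q₀ x * f q₀ x * ((h : ℝ → ℝ) x : ℂ)) ∧
      HasFDerivAt (fun q => f q 0) L q₀ := by
  obtain ⟨F0dd, hF0dd, hf0c, hf0dc, _, _, _⟩ := sol_pack (hf q₀).1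
  obtain ⟨φ0dd, hφ0dd, hφ0c, hφ0dc, _, _, _⟩ := sol_pack (hφ q₀).1
  set gC : ℝ → ℂ := fun x => φ q₀ x * f q₀ x with hgCdef
  have hgCc : ContinuousOn gC (Icc 0 1) := hφ0c.mul hf0c
  obtain ⟨Mg0, hMg0⟩ := isCompact_Icc.exists_bound_of_continuousOn hgCc
  set Mg : ℝ := max Mg0 0 with hMgdef
  have hMg : ∀ x ∈ Icc (0:ℝ) 1, ‖gC x‖ ≤ Mg := fun x hx => (hMg0 x hx).trans (le_max_left _ _)
  have hMgpos : (0:ℝ) ≤ Mg := le_max_right _ _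
  obtain ⟨Mφ0, hMφ0⟩ := isCompact_Icc.exists_bound_of_continuousOn hφ0c
  set Mφ : ℝ := max Mφ0 0 with hMφdef
  have hMφ : ∀ x ∈ Icc (0:ℝ) 1, ‖φ q₀ x‖ ≤ Mφ := fun x hx => (hMφ0 x hx).trans (le_max_left _ _)
  have hMφpos : (0:ℝ) ≤ Mφ := le_max_right _ _
  obtain ⟨C, hCpos, hC⟩ := jost_diff_bound k f f' hf q₀
  -- integrability of the integrand of L
  have hint : ∀ h : Lp ℝ 2 (volume.restrict (Ioo (0:ℝ) 1)),
      Integrable (fun x => gC x * ((h : ℝ → ℝ) x : ℂ)) (volume.restrict (Ioo (0:ℝ) 1)) := by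
    intro h
    have hh : Integrable (fun x => (((h : ℝ → ℝ) x : ℝ) : ℂ)) (volume.restrict (Ioo (0:ℝ) 1)) :=
      ((Lp.memLp h).integrable (by norm_num)).ofReal
    refine Integrable.bdd_mul (c := Mg) hh ?_ ?_
    · exact (hgCc.mono Ioo_subset_Icc_self).aestronglyMeasurable measurableSet_Ioo
    · exact (ae_restrict_iff' measurableSet_Ioo).2
        (ae_of_all _ fun x hx => hMg x (Ioo_subset_Icc_self hx))
  have hbound : ∀ h : Lp ℝ 2 (volume.restrict (Ioo (0:ℝ) 1)),
      ‖∫ x, gC x * ((h : ℝ → ℝ) x : ℂ) ∂(volume.restrict (Ioo (0:ℝ) 1))‖ ≤ Mg * ‖h‖ := by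
    intro h
    have h1 : ‖∫ x, gC x * ((h : ℝ → ℝ) x : ℂ) ∂(volume.restrict (Ioo (0:ℝ) 1))‖ ≤
        ∫ x, ‖gC x * ((h : ℝ → ℝ) x : ℂ)‖ ∂(volume.restrict (Ioo (0:ℝ) 1)) :=
      norm_integral_le_integral_norm _
    have h2 : (∫ x, ‖gC x * ((h : ℝ → ℝ) x : ℂ)‖ ∂(volume.restrict (Ioo (0:ℝ) 1))) ≤
        ∫ x, Mg * ‖(h : ℝ → ℝ) x‖ ∂(volume.restrict (Ioo (0:ℝ) 1)) := by
      apply integral_mono_ae (hint h).norm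
        ((((Lp.memLp h).integrable (by norm_num)).norm.const_mul Mg))
      filter_upwards [(ae_restrict_iff' measurableSet_Ioo).2
        (ae_of_all _ fun x (hx : x ∈ Ioo (0:ℝ) 1) => hMg x (Ioo_subset_Icc_self hx))] with x hx
      rw [norm_mul, Complex.norm_real]
      exact mul_le_mul_of_nonneg_right hx (norm_nonneg _)
    have h3 : (∫ x, Mg * ‖(h : ℝ → ℝ) x‖ ∂(volume.restrict (Ioo (0:ℝ) 1))) =
        Mg * ∫ x, ‖(h : ℝ → ℝ) x‖ ∂(volume.restrict (Ioo (0:ℝ) 1)) :=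
      integral_const_mul Mg _
    have h4 := int_norm_le h
    calc ‖∫ x, gC x * ((h : ℝ → ℝ) x : ℂ) ∂(volume.restrict (Ioo (0:ℝ) 1))‖ ≤
          ∫ x, Mg * ‖(h : ℝ → ℝ) x‖ ∂(volume.restrict (Ioo (0:ℝ) 1)) := le_trans h1 h2
      _ = Mg * ∫ x, ‖(h : ℝ → ℝ) x‖ ∂(volume.restrict (Ioo (0:ℝ) 1)) := h3
      _ ≤ Mg * ‖h‖ := mul_le_mul_of_nonneg_left h4 hMgpos
  -- the continuous linear map
  set Llin : Lp ℝ 2 (volume.restrict (Ioo (0:ℝ) 1)) →ₗ[ℝ] ℂ :=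
    { toFun := fun h => ∫ x, gC x * ((h : ℝ → ℝ) x : ℂ) ∂(volume.restrict (Ioo (0:ℝ) 1)),
      map_add' := by
        intro h₁ h₂
        have hae : ∀ᵐ x ∂(volume.restrict (Ioo (0:ℝ) 1)),
            gC x * ((((h₁ + h₂ : Lp ℝ 2 (volume.restrict (Ioo (0:ℝ) 1))) : ℝ → ℝ) x : ℂ)) =
            gC x * ((h₁ : ℝ → ℝ) x : ℂ) + gC x * ((h₂ : ℝ → ℝ) x : ℂ) := by
          filter_upwards [Lp.coeFn_add h₁ h₂] with x hx
          rw [hx]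
          simp only [Pi.add_apply, Complex.ofReal_add]
          ring
        rw [integral_congr_ae hae, integral_add (hint h₁) (hint h₂)]
      map_smul' := by
        intro c h
        have hae : ∀ᵐ x ∂(volume.restrict (Ioo (0:ℝ) 1)),
            gC x * ((((c • h : Lp ℝ 2 (volume.restrict (Ioo (0:ℝ) 1))) : ℝ → ℝ) x : ℂ)) =
            c • (gC x * ((h : ℝ → ℝ) x : ℂ)) := by
          filter_upwards [Lp.coeFn_smul c h] with x hx
          rw [hx]
          simp only [Pi.smul_apply, smul_eq_mul, Complex.ofReal_mul, Complex.real_smul]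
          ring
        rw [integral_congr_ae hae, integral_smul]
        rfl } with hLlindef
  set L : Lp ℝ 2 (volume.restrict (Ioo (0:ℝ) 1)) →L[ℝ] ℂ :=
    Llin.mkContinuous Mg hbound with hLdef
  have hLapp : ∀ h, L h = ∫ x, gC x * ((h : ℝ → ℝ) x : ℂ) ∂(volume.restrict (Ioo (0:ℝ) 1)) :=
    fun h => rfl
  -- the formula for L
  have hform : ∀ h : Lp ℝ 2 (volume.restrict (Ioo (0:ℝ) 1)),
      L h = ∫ x in (0:ℝ)..1, φ q₀ x * f q₀ x * ((h : ℝ → ℝ) x : ℂ) := by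
    intro h
    rw [hLapp h, intervalIntegral.integral_of_le zero_le_one, integral_Ioc_eq_integral_Ioo]
  refine ⟨L, hform, ?_⟩
  -- L h in terms of extQ h
  have hLext : ∀ h : Lp ℝ 2 (volume.restrict (Ioo (0:ℝ) 1)),
      L h = ∫ t in (0:ℝ)..1, gC t * extQ h t := by
    intro h
    rw [hLapp h, intervalIntegral.integral_of_le zero_le_one, integral_Ioc_eq_integral_Ioo]
    apply setIntegral_congr_fun measurableSet_Ioo
    intro x hx
    simp only [extQ, indicator_of_mem hx]
  -- derivative
  rw [hasFDerivAt_iff_isLittleO_nhds_zero, Asymptotics.isLittleO_iff]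
  intro ε hε
  have hδpos : 0 < min 1 (ε / (Mφ * C + 1)) :=
    lt_min one_pos (div_pos hε (by positivity))
  filter_upwards [Metric.ball_mem_nhds (0 : Lp ℝ 2 (volume.restrict (Ioo (0:ℝ) 1))) hδpos]
    with h hh
  rw [Metric.mem_ball, dist_zero_right] at hh
  have hh1 : ‖h‖ ≤ 1 := le_trans hh.le (min_le_left _ _)
  have hhe : ‖h‖ ≤ ε / (Mφ * C + 1) := le_trans hh.le (min_le_right _ _)
  set q₁ := q₀ + h with hq₁def
  have hq₁sub : q₁ - q₀ = h := add_sub_cancel_left q₀ h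
  have hq₁norm : ‖q₁ - q₀‖ = ‖h‖ := by rw [hq₁sub]
  obtain ⟨F1dd, hF1dd, hf1c, _, _, _, _⟩ := sol_pack (hf q₁).1
  -- star identity
  have hstar := star_id k (hf q₀) (hf q₁) (hφ q₀)
  -- H is a.e. extQ h
  have hHae : (fun t => extQ q₁ t - extQ q₀ t) =ᵐ[volume] extQ h := by
    have := extQ_sub_ae q₁ q₀
    rw [hq₁sub] at this
    exact this
  have hLh : L h = ∫ t in (0:ℝ)..1, gC t * (extQ q₁ t - extQ q₀ t) := by
    rw [hLext h]
    apply intervalIntegral.integral_congr_ae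
    filter_upwards [hHae] with t ht _
    rw [ht]
  -- integrability pieces
  have hHint : IntegrableOn (fun t => extQ q₁ t - extQ q₀ t) (Icc (0:ℝ) 1) volume :=
    ((extQ_integrable q₁).sub (extQ_integrable q₀)).integrableOn
  have hii1 : IntervalIntegrable
      (fun t => (extQ q₁ t - extQ q₀ t) * (φ q₀ t * f q₁ t)) volume 0 1 :=
    ii_mul_cont hHint (hφ0c.mul hf1c)
  have hii2 : IntervalIntegrable (fun t => gC t * (extQ q₁ t - extQ q₀ t)) volume 0 1 :=
    ii_cont_mul hHint hgCc
  -- the remainder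
  have hkey : f q₁ 0 - f q₀ 0 - L h =
      ∫ t in (0:ℝ)..1, ((extQ q₁ t - extQ q₀ t) * (φ q₀ t * f q₁ t) -
        gC t * (extQ q₁ t - extQ q₀ t)) := by
    rw [hstar, hLh, intervalIntegral.integral_sub hii1 hii2]
  have hbnd : ‖f q₁ 0 - f q₀ 0 - L h‖ ≤ Mφ * C * ‖h‖ * ‖h‖ := by
    rw [hkey]
    calc ‖∫ t in (0:ℝ)..1, ((extQ q₁ t - extQ q₀ t) * (φ q₀ t * f q₁ t) -
            gC t * (extQ q₁ t - extQ q₀ t))‖ ≤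
          ∫ t in (0:ℝ)..1, ‖(extQ q₁ t - extQ q₀ t) * (φ q₀ t * f q₁ t) -
            gC t * (extQ q₁ t - extQ q₀ t)‖ :=
        intervalIntegral.norm_integral_le_integral_norm zero_le_one
      _ ≤ ∫ t in (0:ℝ)..1, ‖extQ q₁ t - extQ q₀ t‖ * (Mφ * (C * ‖h‖)) := by
          apply intervalIntegral.integral_mono_on zero_le_one
            ((hii1.sub hii2).norm)
            (by
              rw [intervalIntegrable_iff, uIoc_of_le zero_le_one]
              exact IntegrableOn.mono_set (hHint.norm.mul_const _) Ioc_subset_Icc_self)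
          intro t ht
          have hptw : (extQ q₁ t - extQ q₀ t) * (φ q₀ t * f q₁ t) -
              gC t * (extQ q₁ t - extQ q₀ t) =
              (extQ q₁ t - extQ q₀ t) * (φ q₀ t * (f q₁ t - f q₀ t)) := by
            show _ - φ q₀ t * f q₀ t * _ = _
            ring
          rw [hptw, norm_mul, norm_mul]
          have hw := hC q₁ (by rw [hq₁norm]; exact hh1) t ht
          rw [hq₁norm] at hw
          have hφt := hMφ t ht
          have : ‖φ q₀ t‖ * ‖f q₁ t - f q₀ t‖ ≤ Mφ * (C * ‖h‖) := by
            apply mul_le_mul hφt hw (norm_nonneg _) hMφpos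
          exact mul_le_mul_of_nonneg_left this (norm_nonneg _)
      _ = (∫ t in (0:ℝ)..1, ‖extQ q₁ t - extQ q₀ t‖) * (Mφ * (C * ‖h‖)) :=
          intervalIntegral.integral_mul_const _ _
      _ ≤ ‖h‖ * (Mφ * (C * ‖h‖)) := by
          apply mul_le_mul_of_nonneg_right
          · have := intH_le q₁ q₀
            rw [hq₁norm] at this
            exact this
          · positivity
      _ = Mφ * C * ‖h‖ * ‖h‖ := by ring
  have hfin : Mφ * C * ‖h‖ ≤ ε := by
    have hle : Mφ * C * ‖h‖ ≤ (Mφ * C + 1) * (ε / (Mφ * C + 1)) := by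
      apply mul_le_mul (by linarith) hhe (norm_nonneg _) (by positivity)
    have heq : (Mφ * C + 1) * (ε / (Mφ * C + 1)) = ε := by
      field_simp
    linarith
  show ‖f (q₀ + h) 0 - f q₀ 0 - L h‖ ≤ ε * ‖h‖
  calc ‖f (q₀ + h) 0 - f q₀ 0 - L h‖ ≤ Mφ * C * ‖h‖ * ‖h‖ := hbnd
    _ ≤ ε * ‖h‖ := mul_le_mul_of_nonneg_right hfin (norm_nonneg _)
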